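/- Let $k\ge 1$, $r=2^k-1$, and let $E$ be a set of size $2r$ with a fixed subset $A\subseteq E$ of size $r$; let $B=E\setminus A$. Define abelian groups $\Gamma_k=\mathbb{Z}$ and $\Gamma_i=\mathbb{Z}_{2^i}$ for $i\in[k-1]$, and labelings $\psi_i(e)=2^{i-1}-1$ for $e\in A$, $\psi_i(e)=2^{i-1}$ for $e\notin A$ when $i\ne k$, and $\psi_k(e)=-2^{k-1}$ for $e\notin A$. Then: (a) $\psi_i(B)\ne 0$ for all $i\in[k]$; and (b) for every $r$-element subset $A'\subseteq E$ with $A'\ne B$ (equivalently, with $|A\setminus A'|\le r-1$, i.e., $A'$ obtained from $A$ by exchanging $\ell$ elements for some $0\le\ell\le r-1$), there exists $i\in[k]$ with $\psi_i(A')=0$. -/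

import Mathlib

private lemma sum_split {E : Type*} [DecidableEq E] {R : Type*} [AddCommMonoid R]
    (S A : Finset E) (a b : R) :
    ∑ e ∈ S, (if e ∈ A then a else b) = (S ∩ A).card • a + (S \ A).card • b := by
  rw [Finset.sum_ite, Finset.sum_const, Finset.sum_const]
  have h1 : Finset.filter (fun e => e ∈ A) S = S ∩ A := by ext e; simp [and_comm]
  have h2 : Finset.filter (fun e => e ∉ A) S = S \ A := by ext e; simp [Finset.mem_sdiff]
  rw [h1, h2]

/-- Example 5.1 (tightness example): with `r = 2^k - 1`, `|E| = 2r`, `A ⊆ E` of size `r`,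
`B = E \ A`, and labelings `ψ_i` into `ZMod (2^i)` for `i ∈ [k-1]` and into `ℤ` for `i = k`
given by `ψ_i(e) = 2^{i-1} - 1` on `A`, `ψ_i(e) = 2^{i-1}` off `A` (`i ≠ k`), and
`ψ_k(e) = -2^{k-1}` off `A`:  (a) `ψ_i(B) ≠ 0` for all `i`; and (b) every `r`-set
`A' ≠ B` is zero in some labeling. -/
theorem stmt_7 {E : Type*} [Fintype E] [DecidableEq E]
    (k : ℕ) (hk : 1 ≤ k) (r : ℕ) (hr : r = 2 ^ k - 1)
    (hE : Fintype.card E = 2 * r) (A : Finset E) (hA : A.card = r) :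
    (∀ i, 1 ≤ i → i ≤ k - 1 →
      ∑ e ∈ Aᶜ, (if e ∈ A then (2 : ZMod (2 ^ i)) ^ (i - 1) - 1
                 else (2 : ZMod (2 ^ i)) ^ (i - 1)) ≠ 0) ∧
    (∑ e ∈ Aᶜ, (if e ∈ A then (2 : ℤ) ^ (k - 1) - 1 else -(2 : ℤ) ^ (k - 1)) ≠ 0) ∧
    ∀ A' : Finset E, A'.card = r → A' ≠ Aᶜ →
      (∃ i, 1 ≤ i ∧ i ≤ k - 1 ∧
        ∑ e ∈ A', (if e ∈ A then (2 : ZMod (2 ^ i)) ^ (i - 1) - 1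
                   else (2 : ZMod (2 ^ i)) ^ (i - 1)) = 0) ∨
      ∑ e ∈ A', (if e ∈ A then (2 : ℤ) ^ (k - 1) - 1 else -(2 : ℤ) ^ (k - 1)) = 0 := by
  obtain ⟨K, rfl⟩ : ∃ K, k = K + 1 := ⟨k - 1, by omega⟩
  simp only [Nat.add_sub_cancel]
  have h2k : r + 1 = 2 ^ (K + 1) := by
    have h1 : 1 ≤ 2 ^ (K + 1) := Nat.one_le_two_pow
    omega
  have hrpos : 1 ≤ r := by
    have h1 : 2 ≤ 2 ^ (K + 1) := by
      calc (2:ℕ) = 2 ^ 1 := rfl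
      _ ≤ 2 ^ (K + 1) := Nat.pow_le_pow_right (by norm_num) (by omega)
    omega
  have hcompl : Aᶜ.card = r := by
    rw [Finset.card_compl, hA, hE]; omega
  refine ⟨?_, ?_, ?_⟩
  · -- (a) for i ∈ [k-1]
    intro i hi1 hiK
    have hsum : (∑ e ∈ Aᶜ, (if e ∈ A then (2 : ZMod (2 ^ i)) ^ (i - 1) - 1
        else (2 : ZMod (2 ^ i)) ^ (i - 1))) = r • (2 : ZMod (2 ^ i)) ^ (i - 1) := by
      rw [Finset.sum_congr rfl (fun e he => if_neg (Finset.mem_compl.mp he)),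
        Finset.sum_const, hcompl]
    rw [hsum]
    intro h0
    have hz : ((r * 2 ^ (i - 1) : ℕ) : ZMod (2 ^ i)) = 0 := by
      push_cast
      rw [← nsmul_eq_mul]
      exact h0
    rw [ZMod.natCast_eq_zero_iff] at hz
    -- r is odd
    have hnd : ¬ (2 ∣ r) := by
      intro ⟨t, ht⟩
      obtain ⟨s, hs⟩ : (2:ℕ) ∣ 2 ^ (K + 1) := dvd_pow_self 2 (Nat.succ_ne_zero K)
      omega
    have hcop : Nat.Coprime (2 ^ i) r :=
      Nat.Coprime.pow_left i ((Nat.Prime.coprime_iff_not_dvd Nat.prime_two).mpr hnd)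
    have hdvd : 2 ^ i ∣ 2 ^ (i - 1) := hcop.dvd_of_dvd_mul_left hz
    have hle := Nat.le_of_dvd (Nat.pow_pos (by norm_num)) hdvd
    have hlt : (2:ℕ) ^ (i - 1) < 2 ^ i := Nat.pow_lt_pow_right (by norm_num) (by omega)
    omega
  · -- (a) for i = k
    have hsum : (∑ e ∈ Aᶜ, (if e ∈ A then (2 : ℤ) ^ K - 1 else -(2 : ℤ) ^ K))
        = r • (-(2 : ℤ) ^ K) := by
      rw [Finset.sum_congr rfl (fun e he => if_neg (Finset.mem_compl.mp he)),
        Finset.sum_const, hcompl]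
    rw [hsum, nsmul_eq_mul]
    have hr1 : (1:ℤ) ≤ (r:ℤ) := by exact_mod_cast hrpos
    have h2 : (0:ℤ) < 2 ^ K := by positivity
    nlinarith
  · -- (b)
    intro A' hA' hne
    have hcl : (A' ∩ A).card + (A' \ A).card = r := by
      rw [← hA']; exact Finset.card_inter_add_card_sdiff A' A
    set c := (A' ∩ A).card with hc
    set l := (A' \ A).card with hl
    have hlt : l < r := by
      rcases Nat.lt_or_ge l r with h | h
      · exact h
      · exfalso
        have hc0 : c = 0 := by omega
        have hemp : A' ∩ A = ∅ := Finset.card_eq_zero.mp hc0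
        have hsub : A' ⊆ Aᶜ := by
          intro e he
          rw [Finset.mem_compl]
          intro heA
          have : e ∈ A' ∩ A := Finset.mem_inter.mpr ⟨he, heA⟩
          simp [hemp] at this
        exact hne (Finset.eq_of_subset_of_card_le hsub (by rw [hcompl, hA']))
    obtain ⟨j, u, hu, hmu⟩ := Nat.exists_eq_two_pow_mul_odd (n := l + 1) (by omega)
    obtain ⟨v, rfl⟩ := hu
    have hjK : j ≤ K := by
      by_contra h
      have h1 : 2 ^ (K + 1) ≤ 2 ^ j := Nat.pow_le_pow_right (by norm_num) (by omega)
      have h2 : 2 ^ j ≤ 2 ^ j * (2 * v + 1) := Nat.le_mul_of_pos_right _ (by omega)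
      omega
    rcases Nat.lt_or_ge j K with hcase | hcase
    · -- i = j + 1 works
      left
      refine ⟨j + 1, by omega, by omega, ?_⟩
      simp only [Nat.add_sub_cancel]
      rw [sum_split, nsmul_eq_mul, nsmul_eq_mul]
      have h2 : ((2 : ZMod (2 ^ (j + 1)))) ^ (j + 1) = 0 := by
        have h := ZMod.natCast_self (2 ^ (j + 1))
        push_cast at h
        exact h
      have h2K : ((2 : ZMod (2 ^ (j + 1)))) ^ (K + 1) = 0 := by
        have he : ((2 : ZMod (2 ^ (j + 1)))) ^ (K + 1) = 2 ^ (j + 1) * 2 ^ (K - j) := by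
          rw [← pow_add]; congr 1; omega
        rw [he, h2, zero_mul]
      have hmu' : ((l : ZMod (2 ^ (j + 1)))) + 1 = 2 ^ j * (2 * v + 1) := by
        have := congrArg (Nat.cast : ℕ → ZMod (2 ^ (j + 1))) hmu
        push_cast at this
        linear_combination this
      have hl' : ((l : ZMod (2 ^ (j + 1)))) = 2 ^ j - 1 := by
        linear_combination hmu' + v * h2
      have hr' : ((r : ZMod (2 ^ (j + 1)))) = -1 := by
        have := congrArg (Nat.cast : ℕ → ZMod (2 ^ (j + 1))) h2k
        push_cast at this
        linear_combination this + h2K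
      have hcl' : ((c : ZMod (2 ^ (j + 1)))) + l = r := by
        have := congrArg (Nat.cast : ℕ → ZMod (2 ^ (j + 1))) hcl
        push_cast at this
        linear_combination this
      have hc' : ((c : ZMod (2 ^ (j + 1)))) = -(2 ^ j) := by
        linear_combination hcl' - hl' + hr'
      rw [hc', hl']
      ring
    · -- j = K : the ℤ labeling vanishes
      have hjK' : j = K := le_antisymm hjK hcase
      subst hjK'
      have hv0 : v = 0 := by
        by_contra h
        have h1 : 2 ^ j * 3 ≤ 2 ^ j * (2 * v + 1) := Nat.mul_le_mul_left _ (by omega)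
        have h2 : (2:ℕ) ^ (j + 1) = 2 * 2 ^ j := by ring
        omega
      subst hv0
      right
      rw [sum_split, nsmul_eq_mul, nsmul_eq_mul]
      have hmu' : (l : ℤ) + 1 = 2 ^ j := by
        have := congrArg (Nat.cast : ℕ → ℤ) hmu
        push_cast at this
        linear_combination this
      have h2k' : (r : ℤ) + 1 = 2 * 2 ^ j := by
        have := congrArg (Nat.cast : ℕ → ℤ) h2k
        push_cast at this
        linear_combination this
      have hcl' : (c : ℤ) + l = r := by exact_mod_cast hcl
      have hc' : (c : ℤ) = 2 ^ j := by linarith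
      rw [hc']
      rw [show ((l : ℤ)) = 2 ^ j - 1 by linarith]
      ring
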